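/- (Lemma 2, core dichotomy) Let V : ((Fin N) → ℝ³) → ℝ be C², invariant under the diagonal O(3)-action and under a permutation σ of Fin N. Let r‡ be a stationary point of V whose Hessian has a one-dimensional negative eigenspace spanned by a unit vector e. Let γ₊, γ₋ : ℝ → ((Fin N) → ℝ³) be solutions of dγ/ds = −∇V(γ(s)) with ∇V(γ±(s)) ≠ 0 for all s, lim_{s→−∞} γ±(s) = r‡, lim_{s→−∞} −∇V(γ±(s))/‖∇V(γ±(s))‖ = ±e, lim_{s→+∞} γ₋(s) = r_R, and lim_{s→+∞} γ₊(s) = r_P. Assume the uniqueness property: any two solutions of the gradient flow that converge as s→−∞ to the same point with the same limiting normalized negative-gradient direction coincide up to a parameter translation s ↦ s + s₀. If σ·r‡ = g·r‡ for some A ∈ O(3) acting diagonally as g, then either (g·r_R = σ·r_R and g·r_P = σ·r_P) or (g·r_R = σ·r_P and g·r_P = σ·r_R). -/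

import Mathlib

open Filter

/-- The configuration space `(ℝ³)^N` with its standard Euclidean inner product. -/
noncomputable abbrev Conf (N : ℕ) : Type :=
  PiLp 2 (fun _ : Fin N => EuclideanSpace ℝ (Fin 3))

/-- The permutation action on configurations and tangent vectors: `(σ·r) i = r (σ i)`. -/
noncomputable def permAct (N : ℕ) (σ : Equiv.Perm (Fin N)) (r : Conf N) : Conf N :=
  WithLp.toLp 2 (fun i => r (σ i))

/-- The diagonal action of a `3 × 3` matrix `A` on configurations and tangent vectors:
`(g·r) i = A (r i)`. -/
noncomputable def rotAct (N : ℕ) (A : Matrix (Fin 3) (Fin 3) ℝ) (r : Conf N) : Conf N :=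
  WithLp.toLp 2 (fun i => Matrix.toEuclideanLin A (r i))

section Aux

variable {F : Type*} [NormedAddCommGroup F] [InnerProductSpace ℝ F] [CompleteSpace F]

/-- The gradient of a function invariant under a linear isometric equivalence is equivariant. -/
lemma gradient_comp_isometry (L : F ≃ₗᵢ[ℝ] F) {f : F → ℝ} (hf : Differentiable ℝ f)
    (hfL : ∀ x, f (L x) = f x) (x : F) : gradient f (L x) = L (gradient f x) := by
  set Lc := L.toLinearIsometry.toContinuousLinearMap with hLcdef
  have h2 : HasFDerivAt f ((fderiv ℝ f (L x)).comp Lc) x := by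
    have h := (hf (L x)).hasFDerivAt.comp x (Lc.hasFDerivAt (x := x))
    have hfun : (f ∘ ⇑L) = f := funext fun y => hfL y
    rwa [hfun] at h
  have h3 : HasFDerivAt f (InnerProductSpace.toDual ℝ F (gradient f x)) x :=
    (hf x).hasGradientAt.hasFDerivAt
  have heq : (fderiv ℝ f (L x)).comp Lc = InnerProductSpace.toDual ℝ F (gradient f x) :=
    h2.unique h3
  have hdual : InnerProductSpace.toDual ℝ F (gradient f (L x)) = fderiv ℝ f (L x) :=
    (InnerProductSpace.toDual ℝ F).apply_symm_apply _
  apply ext_inner_right ℝ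
  intro v
  obtain ⟨w, rfl⟩ := L.surjective v
  have e1 : (inner ℝ (gradient f (L x)) (L w) : ℝ) = fderiv ℝ f (L x) (L w) := by
    rw [← hdual, InnerProductSpace.toDual_apply_apply]
  have e2 : fderiv ℝ f (L x) (L w) = (inner ℝ (gradient f x) w : ℝ) := by
    have h := DFunLike.congr_fun heq w
    simp only [ContinuousLinearMap.comp_apply, InnerProductSpace.toDual_apply_apply] at h
    exact h
  rw [e1, e2, LinearIsometryEquiv.inner_map_map]

/-- The Hessian at a fixed point commutes with the isometry, given gradient equivariance. -/
lemma hessian_comm_isometry (L : F ≃ₗᵢ[ℝ] F) {f : F → ℝ} (H : F → F →L[ℝ] F)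
    (hH : ∀ x, HasFDerivAt (gradient f) (H x) x)
    (hgrad : ∀ x, gradient f (L x) = L (gradient f x)) {p : F} (hp : L p = p) (v : F) :
    H p (L v) = L (H p v) := by
  set Lc := L.toLinearIsometry.toContinuousLinearMap with hLcdef
  have h1 : HasFDerivAt (fun x => gradient f (L x)) ((H p).comp Lc) p := by
    have h := (hH (L p)).comp p (Lc.hasFDerivAt (x := p))
    rw [hp] at h
    exact h
  have h2 : HasFDerivAt (fun x => gradient f (L x)) (Lc.comp (H p)) p := by
    have h := (Lc.hasFDerivAt (x := gradient f p)).comp p (hH p)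
    have hfun : (⇑Lc ∘ gradient f) = fun x => gradient f (L x) :=
      funext fun y => (hgrad y).symm
    rwa [hfun] at h
  have h := h1.unique h2
  exact DFunLike.congr_fun h v

end Aux

set_option synthInstance.maxHeartbeats 400000 in
set_option maxHeartbeats 4000000 in
/-- Lemma 2, core dichotomy: let `V` be C², invariant under the diagonal
`O(3)`-action and under a permutation `σ`; let `r‡` be a stationary point whose Hessian (the
derivative of the gradient vector field) has a one-dimensional negative eigenspace spanned by
a unit vector `e`. Let `γ₊, γ₋` be negative-gradient-flow solutions with nowhere-vanishing
gradient emanating from `r‡` in the limiting directions `±e` as `s → −∞` and converging to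
`r_P`, `r_R` respectively as `s → +∞`. Assume the uniqueness property: any two gradient-flow
solutions converging as `s → −∞` to the same point with the same limiting normalized
negative-gradient direction coincide up to a parameter translation. If `σ·r‡ = g·r‡` for some
`A ∈ O(3)` acting diagonally as `g`, then either (`g·r_R = σ·r_R` and `g·r_P = σ·r_P`) or
(`g·r_R = σ·r_P` and `g·r_P = σ·r_R`). -/
theorem reaction_path_endpoint_dichotomy (N : ℕ) (σ : Equiv.Perm (Fin N)) (V : Conf N → ℝ)
    (hV : ContDiff ℝ 2 V)
    (hinvO : ∀ A : Matrix (Fin 3) (Fin 3) ℝ, A ∈ Matrix.orthogonalGroup (Fin 3) ℝ →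
      ∀ r : Conf N, V (rotAct N A r) = V r)
    (hinvσ : ∀ r : Conf N, V (permAct N σ r) = V r)
    (H : Conf N → Conf N →L[ℝ] Conf N)
    (hH : ∀ x : Conf N, HasFDerivAt (gradient V) (H x) x)
    (rdd : Conf N) (hstat : gradient V rdd = 0)
    (lam : ℝ) (hlam : lam < 0) (e : Conf N) (he : ‖e‖ = 1)
    (heig : H rdd e = lam • e)
    (hspan : ∀ v : Conf N, H rdd v = lam • v → ∃ c : ℝ, v = c • e)
    (γp γm : ℝ → Conf N) (rR rP : Conf N)
    (hγp : ∀ s : ℝ, HasDerivAt γp (-gradient V (γp s)) s)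
    (hγm : ∀ s : ℝ, HasDerivAt γm (-gradient V (γm s)) s)
    (hnep : ∀ s : ℝ, gradient V (γp s) ≠ 0)
    (hnem : ∀ s : ℝ, gradient V (γm s) ≠ 0)
    (hbotp : Tendsto γp atBot (nhds rdd))
    (hbotm : Tendsto γm atBot (nhds rdd))
    (hdirp : Tendsto (fun s => -(‖gradient V (γp s)‖⁻¹ • gradient V (γp s))) atBot (nhds e))
    (hdirm : Tendsto (fun s => -(‖gradient V (γm s)‖⁻¹ • gradient V (γm s))) atBot
      (nhds (-e)))
    (htopm : Tendsto γm atTop (nhds rR))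
    (htopp : Tendsto γp atTop (nhds rP))
    (huniq : ∀ (γ₁ γ₂ : ℝ → Conf N) (p d : Conf N),
      (∀ s : ℝ, HasDerivAt γ₁ (-gradient V (γ₁ s)) s) →
      (∀ s : ℝ, HasDerivAt γ₂ (-gradient V (γ₂ s)) s) →
      (∀ s : ℝ, gradient V (γ₁ s) ≠ 0) → (∀ s : ℝ, gradient V (γ₂ s) ≠ 0) →
      Tendsto γ₁ atBot (nhds p) → Tendsto γ₂ atBot (nhds p) →
      Tendsto (fun s => -(‖gradient V (γ₁ s)‖⁻¹ • gradient V (γ₁ s))) atBot (nhds d) →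
      Tendsto (fun s => -(‖gradient V (γ₂ s)‖⁻¹ • gradient V (γ₂ s))) atBot (nhds d) →
      ∃ s₀ : ℝ, ∀ s : ℝ, γ₁ s = γ₂ (s + s₀))
    (A : Matrix (Fin 3) (Fin 3) ℝ) (hA : A ∈ Matrix.orthogonalGroup (Fin 3) ℝ)
    (hg : permAct N σ rdd = rotAct N A rdd) :
    (rotAct N A rR = permAct N σ rR ∧ rotAct N A rP = permAct N σ rP) ∨
    (rotAct N A rR = permAct N σ rP ∧ rotAct N A rP = permAct N σ rR) := by
  classical
  -- the rotation as a linear isometric equivalence of ℝ³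
  have hA1 : A * star A = 1 := Matrix.mem_unitaryGroup_iff.mp hA
  have hA2 : star A * A = 1 := Matrix.mem_unitaryGroup_iff'.mp hA
  have humem : Matrix.toEuclideanCLM (𝕜 := ℝ) A ∈
      unitary (EuclideanSpace ℝ (Fin 3) →L[ℝ] EuclideanSpace ℝ (Fin 3)) := by
    constructor
    · rw [← map_star, ← map_mul, hA2, map_one]
    · rw [← map_star, ← map_mul, hA1, map_one]
  set ρ : EuclideanSpace ℝ (Fin 3) ≃ₗᵢ[ℝ] EuclideanSpace ℝ (Fin 3) :=
    Unitary.linearIsometryEquiv ⟨_, humem⟩ with hρdef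
  have hρ : ∀ x, ρ x = Matrix.toEuclideanLin A x := fun x => rfl
  -- the actions as linear isometric equivalences of Conf N
  set M : Conf N ≃ₗᵢ[ℝ] Conf N :=
    LinearIsometryEquiv.piLpCongrRight 2 (fun _ : Fin N => ρ) with hMdef
  have hM : ∀ r, M r = rotAct N A r := fun r => PiLp.ext fun i => hρ (r i)
  set P : Conf N ≃ₗᵢ[ℝ] Conf N :=
    LinearIsometryEquiv.piLpCongrLeft 2 ℝ (EuclideanSpace ℝ (Fin 3)) σ.symm with hPdef
  have hP : ∀ r, P r = permAct N σ r := fun r => rfl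
  set L : Conf N ≃ₗᵢ[ℝ] Conf N := P.trans M.symm with hLdef
  have hL : ∀ r, L r = M.symm (permAct N σ r) := fun r => by
    show M.symm (P r) = _
    rw [hP]
  -- invariance of V under L
  have hVM : ∀ z, V (M.symm z) = V z := fun z => by
    have h := hinvO A hA (M.symm z)
    rw [← hM, M.apply_symm_apply] at h
    exact h.symm
  have hVL : ∀ r, V (L r) = V r := fun r => by
    rw [hL, hVM, hinvσ]
  -- L fixes the transition state
  have hfix : L rdd = rdd := by
    rw [hL, hg, ← hM, M.symm_apply_apply]
  -- gradient equivariance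
  have hdiff : Differentiable ℝ V := hV.differentiable two_ne_zero
  have hgrad : ∀ x, gradient V (L x) = L (gradient V x) :=
    gradient_comp_isometry L hdiff hVL
  -- L e is an eigenvector, hence L e = ± e
  have heigL : H rdd (L e) = lam • L e := by
    rw [hessian_comm_isometry L H hH hgrad hfix, heig, map_smul]
  obtain ⟨c, hc⟩ := hspan (L e) heigL
  have habs : |c| = 1 := by
    have h1 : ‖L e‖ = 1 := by rw [L.norm_map, he]
    rw [hc, norm_smul, he, mul_one, Real.norm_eq_abs] at h1
    exact h1
  -- the main conjugation argument
  have main : ∀ (γ₁ γ₂ : ℝ → Conf N) (r₁ r₂ d : Conf N),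
      (∀ s, HasDerivAt γ₁ (-gradient V (γ₁ s)) s) →
      (∀ s, HasDerivAt γ₂ (-gradient V (γ₂ s)) s) →
      (∀ s, gradient V (γ₁ s) ≠ 0) → (∀ s, gradient V (γ₂ s) ≠ 0) →
      Tendsto γ₁ atBot (nhds rdd) → Tendsto γ₂ atBot (nhds rdd) →
      Tendsto (fun s => -(‖gradient V (γ₁ s)‖⁻¹ • gradient V (γ₁ s))) atBot (nhds d) →
      Tendsto (fun s => -(‖gradient V (γ₂ s)‖⁻¹ • gradient V (γ₂ s))) atBot (nhds (L d)) →
      Tendsto γ₁ atTop (nhds r₁) → Tendsto γ₂ atTop (nhds r₂) →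
      L r₁ = r₂ := by
    intro γ₁ γ₂ r₁ r₂ d h1 h2 hn1 hn2 hb1 hb2 hd1 hd2 ht1 ht2
    set δ : ℝ → Conf N := fun s => L (γ₁ s) with hδdef
    have hgδ : ∀ s, gradient V (δ s) = L (gradient V (γ₁ s)) := fun s => hgrad _
    set Lc := L.toLinearIsometry.toContinuousLinearMap with hLcdef
    have hδ' : ∀ s, HasDerivAt δ (-gradient V (δ s)) s := by
      intro s
      have h := (Lc.hasFDerivAt (x := γ₁ s)).comp_hasDerivAt s (h1 s)
      have hfun : (⇑Lc ∘ γ₁) = δ := rfl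
      have hder : Lc (-gradient V (γ₁ s)) = -gradient V (δ s) := by
        show L (-gradient V (γ₁ s)) = _
        rw [map_neg, hgδ]
      rw [hfun, hder] at h
      exact h
    have hnδ : ∀ s, gradient V (δ s) ≠ 0 := by
      intro s h
      rw [hgδ, LinearIsometryEquiv.map_eq_zero_iff] at h
      exact hn1 s h
    have hbδ : Tendsto δ atBot (nhds rdd) := by
      have h := (L.continuous.tendsto rdd).comp hb1
      rwa [hfix] at h
    have hdδ : Tendsto (fun s => -(‖gradient V (δ s)‖⁻¹ • gradient V (δ s))) atBot
        (nhds (L d)) := by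
      have heqd : (fun s => -(‖gradient V (δ s)‖⁻¹ • gradient V (δ s)))
          = fun s => L (-(‖gradient V (γ₁ s)‖⁻¹ • gradient V (γ₁ s))) := by
        funext s
        rw [hgδ, L.norm_map, map_neg, map_smul]
      rw [heqd]
      exact (L.continuous.tendsto d).comp hd1
    have htδ : Tendsto δ atTop (nhds (L r₁)) := (L.continuous.tendsto r₁).comp ht1
    obtain ⟨s₀, hs₀⟩ := huniq δ γ₂ rdd (L d) hδ' h2 hnδ hn2 hbδ hb2 hdδ hd2
    have h2shift : Tendsto (fun s => γ₂ (s + s₀)) atTop (nhds r₂) :=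
      ht2.comp (tendsto_atTop_add_const_right atTop s₀ tendsto_id)
    have htδ2 : Tendsto δ atTop (nhds r₂) := by
      rw [funext hs₀]
      exact h2shift
    exact tendsto_nhds_unique htδ htδ2
  -- translate conclusions about L back to the actions
  have trans1 : ∀ x y : Conf N, L x = y → rotAct N A y = permAct N σ x := by
    intro x y h
    rw [hL] at h
    rw [← hM]
    exact (M.symm_apply_eq.mp h).symm
  rcases (abs_eq zero_le_one).mp habs with hc1 | hc1
  · -- L e = e : L fixes both endpoints
    subst hc1
    rw [one_smul] at hc
    have hLR : L rR = rR :=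
      main γm γm rR rR (-e) hγm hγm hnem hnem hbotm hbotm hdirm
        (by rw [map_neg, hc]; exact hdirm) htopm htopm
    have hLP : L rP = rP :=
      main γp γp rP rP e hγp hγp hnep hnep hbotp hbotp hdirp
        (by rw [hc]; exact hdirp) htopp htopp
    exact Or.inl ⟨trans1 rR rR hLR, trans1 rP rP hLP⟩
  · -- L e = -e : L swaps the endpoints
    subst hc1
    rw [neg_smul, one_smul] at hc
    have hPR : L rP = rR :=
      main γp γm rP rR e hγp hγm hnep hnem hbotp hbotm hdirp
        (by rw [hc]; exact hdirm) htopp htopm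
    have hRP : L rR = rP :=
      main γm γp rR rP (-e) hγm hγp hnem hnep hbotm hbotp hdirm
        (by rw [map_neg, hc, neg_neg]; exact hdirp) htopm htopp
    exact Or.inr ⟨trans1 rP rR hPR, trans1 rR rP hRP⟩
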